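/- Let a₁, a₂, a₃ be pairwise coprime positive integers with lᵢ ≥ 2 for all i. Then the number of non-representable natural numbers is N(a) = ½(Σᵢ (lᵢ-1)aᵢ - l₁l₂l₃ + 1). -/

import Mathlib

open Finset

set_option maxHeartbeats 4000000 in
theorem frob_aux (a1 a2 a3 l1 l2 l3 : ℕ)
    (ha1 : 0 < a1) (ha2 : 0 < a2) (ha3 : 0 < a3)
    (h12 : Nat.Coprime a1 a2) (h13 : Nat.Coprime a1 a3) (h23 : Nat.Coprime a2 a3)
    (hl1 : IsLeast {l : ℕ | 0 < l ∧ ∃ x y : ℕ, l * a1 = x * a2 + y * a3} l1)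
    (hl2 : IsLeast {l : ℕ | 0 < l ∧ ∃ x y : ℕ, l * a2 = x * a1 + y * a3} l2)
    (hl3 : IsLeast {l : ℕ | 0 < l ∧ ∃ x y : ℕ, l * a3 = x * a1 + y * a2} l3)
    (h2l1 : 2 ≤ l1) (h2l2 : 2 ≤ l2) (h2l3 : 2 ≤ l3)
    (hle2 : a1 ≤ a2) (hle3 : a1 ≤ a3) :
    2 * {z : ℕ | ¬∃ y1 y2 y3 : ℕ, z = y1 * a1 + y2 * a2 + y3 * a3}.ncard
      + l1 * l2 * l3
      = (l1 - 1) * a1 + (l2 - 1) * a2 + (l3 - 1) * a3 + 1 := by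
  obtain ⟨⟨hl1p, A, B, hr1⟩, hl1m⟩ := hl1
  have hl2a3 : l2 ≤ a3 := hl2.2 ⟨ha3, 0, a2, by ring⟩
  have hl3a2 : l3 ≤ a2 := hl3.2 ⟨ha2, 0, a3, by ring⟩
  have hl2p : 0 < l2 := hl2.1.1
  have hl3p : 0 < l3 := hl3.1.1
  -- rep of l2*a2 with positive a1 coefficient
  obtain ⟨C, D, hC1, hr2⟩ : ∃ C D : ℕ, 1 ≤ C ∧ l2 * a2 = C * a1 + D * a3 := by
    obtain ⟨⟨_, C, D, hr⟩, _⟩ := hl2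
    rcases Nat.eq_zero_or_pos C with hC | hC
    · subst hC
      simp only [Nat.zero_mul, Nat.zero_add] at hr
      have hdvd : a3 ∣ l2 := (Nat.Coprime.dvd_of_dvd_mul_right h23.symm ⟨D, by linarith⟩)
      have hEq : l2 = a3 := le_antisymm hl2a3 (Nat.le_of_dvd hl2p hdvd)
      obtain ⟨k, hk⟩ : ∃ k, a2 = a1 + k := ⟨a2 - a1, by omega⟩
      exact ⟨a3, k, ha3, by rw [hEq, hk]; ring⟩
    · exact ⟨C, D, hC, hr⟩
  -- rep of l3*a3 with positive a1 coefficient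
  obtain ⟨E, F, hE1, hr3⟩ : ∃ E F : ℕ, 1 ≤ E ∧ l3 * a3 = E * a1 + F * a2 := by
    obtain ⟨⟨_, E, F, hr⟩, _⟩ := hl3
    rcases Nat.eq_zero_or_pos E with hE | hE
    · subst hE
      simp only [Nat.zero_mul, Nat.zero_add] at hr
      have hdvd : a2 ∣ l3 := (Nat.Coprime.dvd_of_dvd_mul_right h23 ⟨F, by linarith⟩)
      have hEq : l3 = a2 := le_antisymm hl3a2 (Nat.le_of_dvd hl3p hdvd)
      obtain ⟨k, hk⟩ : ∃ k, a3 = a1 + k := ⟨a3 - a1, by omega⟩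
      exact ⟨a2, k, ha2, by rw [hEq, hk]; ring⟩
    · exact ⟨E, F, hE, hr⟩
  classical
  set L : Finset (ℕ × ℕ) :=
    (Finset.range l2 ×ˢ Finset.range l3).filter (fun p => p.1 < A ∨ p.2 < B) with hLdef
  set w : ℕ × ℕ → ℕ := fun p => p.1 * a2 + p.2 * a3 with hwdef
  -- reduction
  have red : ∀ m : ℕ, ∀ x u v : ℕ, u * a2 + v * a3 ≤ m →
      ∃ x' p, p ∈ L ∧ x * a1 + u * a2 + v * a3 = x' * a1 + w p := by
    intro m
    induction m using Nat.strong_induction_on with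
    | _ m ih =>
      intro x u v hm
      by_cases h3 : l3 ≤ v
      · have key : (u + F) * a2 + (v - l3) * a3 + E * a1 = u * a2 + v * a3 := by
          zify [h3]; linarith [hr3]
        have hlt : (u + F) * a2 + (v - l3) * a3 < m := by have := Nat.mul_pos hE1 ha1; linarith
        obtain ⟨x', p, hp, heq⟩ := ih _ hlt (x + E) (u + F) (v - l3) le_rfl
        exact ⟨x', p, hp, by zify [h3] at heq ⊢; linarith [hr3, heq]⟩
      · by_cases h2 : l2 ≤ u
        · have key : (u - l2) * a2 + (v + D) * a3 + C * a1 = u * a2 + v * a3 := by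
            zify [h2]; linarith [hr2]
          have hlt : (u - l2) * a2 + (v + D) * a3 < m := by have := Nat.mul_pos hC1 ha1; linarith
          obtain ⟨x', p, hp, heq⟩ := ih _ hlt (x + C) (u - l2) (v + D) le_rfl
          exact ⟨x', p, hp, by zify [h2] at heq ⊢; linarith [hr2, heq]⟩
        · by_cases h1 : A ≤ u ∧ B ≤ v
          · have key : (u - A) * a2 + (v - B) * a3 + l1 * a1 = u * a2 + v * a3 := by
              zify [h1.1, h1.2]; linarith [hr1]
            have hlt : (u - A) * a2 + (v - B) * a3 < m := by have := Nat.mul_pos hl1p ha1; linarith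
            obtain ⟨x', p, hp, heq⟩ := ih _ hlt (x + l1) (u - A) (v - B) le_rfl
            exact ⟨x', p, hp, by zify [h1.1, h1.2] at heq ⊢; linarith [hr1, heq]⟩
          · refine ⟨x, (u, v), ?_, by simp only [hwdef]; ring⟩
            simp only [hLdef, Finset.mem_filter, Finset.mem_product, Finset.mem_range]
            push_neg at h1 h2 h3
            exact ⟨⟨h2, h3⟩, by omega⟩
  have za1 : (0:ℤ) < a1 := by exact_mod_cast ha1
  have za2 : (0:ℤ) < a2 := by exact_mod_cast ha2
  have za3 : (0:ℤ) < a3 := by exact_mod_cast ha3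
  have z1 : (l1:ℤ) * a1 = A * a2 + B * a3 := by exact_mod_cast hr1
  -- minimality: elements of L are minimal in their class
  have mini : ∀ u v p q : ℕ, (u, v) ∈ L → (p, q) ∈ L → ∀ x : ℕ, 1 ≤ x →
      u * a2 + v * a3 = x * a1 + (p * a2 + q * a3) → False := by
    intro u v p q hpL hqL x hx heq
    simp only [hLdef, Finset.mem_filter, Finset.mem_product, Finset.mem_range] at hpL hqL
    obtain ⟨⟨hu2, hv3⟩, huv⟩ := hpL
    obtain ⟨⟨hp2, hq3⟩, hpq⟩ := hqL
    have H : (u:ℤ) * a2 + v * a3 = (x:ℤ) * a1 + (p * a2 + q * a3) := by exact_mod_cast heq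
    have hxz : (1:ℤ) ≤ x := by exact_mod_cast hx
    rcases le_or_gt p u with hup | hup <;> rcases le_or_gt q v with hqv | hqv
    · -- p ≤ u, q ≤ v
      have hxeq : x * a1 = (u - p) * a2 + (v - q) * a3 := by
        zify [hup, hqv]; linarith [H]
      have hl1x : l1 ≤ x := hl1m ⟨hx, u - p, v - q, hxeq⟩
      have hl1xz : (l1:ℤ) ≤ x := by exact_mod_cast hl1x
      by_cases hc : A ≤ u - p ∧ B ≤ v - q
      · omega
      · rcases not_and_or.mp hc with hc1 | hc1
        · have hA : u - p < A := not_le.mp hc1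
          have e : ((v:ℤ) - q - B) * a3 = ((x:ℤ) - l1) * a1 + ((A:ℤ) - u + p) * a2 := by
            linear_combination H + z1
          have h1' : (0:ℤ) ≤ ((x:ℤ) - l1) * a1 := mul_nonneg (by linarith) (le_of_lt za1)
          have h2' : (a2:ℤ) ≤ ((A:ℤ) - u + p) * a2 := by
            have h : (1:ℤ) ≤ (A:ℤ) - u + p := by omega
            have := mul_le_mul_of_nonneg_right h za2.le
            linarith
          have hvq2 : (0:ℤ) < (v:ℤ) - q - B := by
            have hmul : (0:ℤ) < ((v:ℤ) - q - B) * a3 := by linarith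
            by_contra hcon
            push_neg at hcon
            have := mul_le_mul_of_nonneg_right hcon za3.le
            linarith
          have hqB : q + B < v := by omega
          have hfin : (v - q - B) * a3 = (x - l1) * a1 + (A - (u - p)) * a2 := by
            zify [show B ≤ v - q from by omega, show q ≤ v from by omega, hl1x,
              show u - p ≤ A from le_of_lt hA, hup]
            linarith [e]
          have := hl3.2 ⟨by omega, x - l1, A - (u - p), hfin⟩
          omega
        · have hB : v - q < B := not_le.mp hc1
          have e : ((u:ℤ) - p - A) * a2 = ((x:ℤ) - l1) * a1 + ((B:ℤ) - v + q) * a3 := by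
            linear_combination H + z1
          have h1' : (0:ℤ) ≤ ((x:ℤ) - l1) * a1 := mul_nonneg (by linarith) (le_of_lt za1)
          have h2' : (a3:ℤ) ≤ ((B:ℤ) - v + q) * a3 := by
            have h : (1:ℤ) ≤ (B:ℤ) - v + q := by omega
            have := mul_le_mul_of_nonneg_right h za3.le
            linarith
          have hup2 : (0:ℤ) < (u:ℤ) - p - A := by
            have hmul : (0:ℤ) < ((u:ℤ) - p - A) * a2 := by linarith
            by_contra hcon
            push_neg at hcon
            have := mul_le_mul_of_nonneg_right hcon za2.le
            linarith
          have hpA : p + A < u := by omega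
          have hfin : (u - p - A) * a2 = (x - l1) * a1 + (B - (v - q)) * a3 := by
            zify [show A ≤ u - p from by omega, show p ≤ u from by omega, hl1x,
              show v - q ≤ B from le_of_lt hB, hqv]
            linarith [e]
          have := hl2.2 ⟨by omega, x - l1, B - (v - q), hfin⟩
          omega
    · -- p ≤ u, v < q
      have e : ((u:ℤ) - p) * a2 = (x:ℤ) * a1 + ((q:ℤ) - v) * a3 := by linear_combination H
      have h2' : (a3:ℤ) ≤ ((q:ℤ) - v) * a3 := by
        have h : (1:ℤ) ≤ (q:ℤ) - v := by omega
        have := mul_le_mul_of_nonneg_right h za3.le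
        linarith
      have hpos : (0:ℤ) < (u:ℤ) - p := by
        have hx1 : (0:ℤ) ≤ (x:ℤ) * a1 := by positivity
        have hmul : (0:ℤ) < ((u:ℤ) - p) * a2 := by linarith
        by_contra hcon
        push_neg at hcon
        have := mul_le_mul_of_nonneg_right hcon za2.le
        linarith
      have hfin : (u - p) * a2 = x * a1 + (q - v) * a3 := by
        zify [hup, le_of_lt hqv]; linarith [e]
      have := hl2.2 ⟨by omega, x, q - v, hfin⟩
      omega
    · -- u < p, q ≤ v
      have e : ((v:ℤ) - q) * a3 = (x:ℤ) * a1 + ((p:ℤ) - u) * a2 := by linear_combination H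
      have h2' : (a2:ℤ) ≤ ((p:ℤ) - u) * a2 := by
        have h : (1:ℤ) ≤ (p:ℤ) - u := by omega
        have := mul_le_mul_of_nonneg_right h za2.le
        linarith
      have hpos : (0:ℤ) < (v:ℤ) - q := by
        have hx1 : (0:ℤ) ≤ (x:ℤ) * a1 := by positivity
        have hmul : (0:ℤ) < ((v:ℤ) - q) * a3 := by linarith
        by_contra hcon
        push_neg at hcon
        have := mul_le_mul_of_nonneg_right hcon za3.le
        linarith
      have hfin : (v - q) * a3 = x * a1 + (p - u) * a2 := by
        zify [hqv, le_of_lt hup]; linarith [e]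
      have := hl3.2 ⟨by omega, x, p - u, hfin⟩
      omega
    · -- u < p, v < q
      have h2' : ((u:ℤ) + 1) * a2 ≤ (p:ℤ) * a2 :=
        mul_le_mul_of_nonneg_right (by omega) za2.le
      have h3' : ((v:ℤ) + 1) * a3 ≤ (q:ℤ) * a3 :=
        mul_le_mul_of_nonneg_right (by omega) za3.le
      have h1' : (1:ℤ) * a1 ≤ (x:ℤ) * a1 :=
        mul_le_mul_of_nonneg_right (by omega) za1.le
      linarith [H]
  -- injectivity of residues
  have hmemL : ∀ u v : ℕ, (u, v) ∈ L ↔ (u < l2 ∧ v < l3) ∧ (u < A ∨ v < B) := by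
    intro u v
    simp only [hLdef, Finset.mem_filter, Finset.mem_product, Finset.mem_range]
  have winj : ∀ p ∈ L, ∀ q ∈ L, w p % a1 = w q % a1 → p = q := by
    have key : ∀ p ∈ L, ∀ q ∈ L, w q ≤ w p → w p % a1 = w q % a1 → p = q := by
      rintro ⟨u, v⟩ hp ⟨p', q'⟩ hq hle hmod
      obtain ⟨⟨hu2, hv3⟩, -⟩ := (hmemL u v).mp hp
      obtain ⟨⟨hp2, hq3⟩, -⟩ := (hmemL p' q').mp hq
      obtain ⟨k, hk⟩ := (Nat.modEq_iff_dvd' hle).mp (Nat.ModEq.symm hmod)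
      have hk' : w (u, v) = a1 * k + w (p', q') := by omega
      simp only [hwdef] at hk'
      rcases Nat.eq_zero_or_pos k with h0 | h0
      · subst h0
        simp only [Nat.mul_zero, Nat.zero_add] at hk'
        -- uniqueness of small representations
        rcases lt_trichotomy u p' with ht | ht | ht
        · exfalso
          have hqv : q' < v := by
            by_contra hcon
            push_neg at hcon
            have h1 : u * a2 < p' * a2 := by
              exact (Nat.mul_lt_mul_right ha2).mpr ht
            have h2 : v * a3 ≤ q' * a3 := Nat.mul_le_mul_right _ hcon
            omega
          have he : (v - q') * a3 = (p' - u) * a2 := by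
            zify [le_of_lt hqv, le_of_lt ht]; linarith [hk']
          have hdvd : a3 ∣ p' - u := by
            apply Nat.Coprime.dvd_of_dvd_mul_right (h23.symm)
            exact ⟨v - q', by linarith [he]⟩
          have : a3 ≤ p' - u := Nat.le_of_dvd (by omega) hdvd
          omega
        · subst ht
          have : v = q' := by
            have : v * a3 = q' * a3 := by omega
            exact Nat.eq_of_mul_eq_mul_right ha3 this
          simp [this]
        · exfalso
          have hqv : v < q' := by
            by_contra hcon
            push_neg at hcon
            have h1 : p' * a2 < u * a2 := (Nat.mul_lt_mul_right ha2).mpr ht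
            have h2 : q' * a3 ≤ v * a3 := Nat.mul_le_mul_right _ hcon
            omega
          have he : (q' - v) * a3 = (u - p') * a2 := by
            zify [le_of_lt hqv, le_of_lt ht]; linarith [hk']
          have hdvd : a3 ∣ u - p' := by
            apply Nat.Coprime.dvd_of_dvd_mul_right (h23.symm)
            exact ⟨q' - v, by linarith [he]⟩
          have : a3 ≤ u - p' := Nat.le_of_dvd (by omega) hdvd
          omega
      · exact absurd hk' (fun hcon => mini u v p' q' hp hq k h0 (by linarith [hcon]))
    intro p hp q hq hmod
    rcases le_total (w q) (w p) with h | h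
    · exact key p hp q hq h hmod
    · exact (key q hq p hp h hmod.symm).symm
  -- surjectivity of residues
  haveI : NeZero a1 := ⟨ha1.ne'⟩
  have wsurj : ∀ r : ℕ, r < a1 → ∃ p ∈ L, w p % a1 = r := by
    intro r hr
    have hu : IsUnit ((a2 : ℕ) : ZMod a1) := (ZMod.isUnit_iff_coprime a2 a1).mpr h12.symm
    set k : ℕ := (((r : ℕ) : ZMod a1) * ((a2 : ℕ) : ZMod a1)⁻¹).val with hkdef
    have hcast : ((k * a2 : ℕ) : ZMod a1) = ((r : ℕ) : ZMod a1) := by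
      push_cast
      rw [hkdef, ZMod.natCast_val, ZMod.cast_id]
      rw [mul_assoc, ZMod.inv_mul_of_unit _ hu, mul_one]
    obtain ⟨x', p, hp, heq⟩ := red (k * a2 + 0) 0 k 0 (by simp)
    refine ⟨p, hp, ?_⟩
    have heq' : k * a2 = x' * a1 + w p := by linarith [heq]
    have h1 : k * a2 % a1 = w p % a1 := by
      rw [heq', Nat.add_comm, Nat.add_mul_mod_self_right]
    have h2 : k * a2 % a1 = r % a1 :=
      (ZMod.natCast_eq_natCast_iff _ _ _).mp hcast
    rw [← h1, h2, Nat.mod_eq_of_lt hr]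
  -- cardinality of L
  have hinjOn : Set.InjOn (fun p => w p % a1) ↑L := by
    intro p hp q hq h
    exact winj p (Finset.mem_coe.mp hp) q (Finset.mem_coe.mp hq) h
  have himg : L.image (fun p => w p % a1) = Finset.range a1 := by
    ext r
    simp only [Finset.mem_image, Finset.mem_range]
    constructor
    · rintro ⟨p, hp, rfl⟩
      exact Nat.mod_lt _ ha1
    · intro hr
      obtain ⟨p, hp, hpr⟩ := wsurj r hr
      exact ⟨p, hp, hpr⟩
  have hcardL : L.card = a1 := by
    rw [← Finset.card_image_of_injOn hinjOn, himg, Finset.card_range]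
  -- the complement rectangle
  have hrect : (Finset.range l2 ×ˢ Finset.range l3).filter (fun p => ¬(p.1 < A ∨ p.2 < B))
      = Finset.Ico A l2 ×ˢ Finset.Ico B l3 := by
    ext ⟨u, v⟩
    simp only [Finset.mem_filter, Finset.mem_product, Finset.mem_range, Finset.mem_Ico]
    omega
  have hboxcard : (Finset.range l2 ×ˢ Finset.range l3).card = l2 * l3 := by
    rw [Finset.card_product, Finset.card_range, Finset.card_range]
  have hcard2 : a1 + (l2 - A) * (l3 - B) = l2 * l3 := by
    have h := Finset.card_filter_add_card_filter_not
      (s := Finset.range l2 ×ˢ Finset.range l3) (p := fun p => p.1 < A ∨ p.2 < B)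
    rw [← hLdef, hrect, hboxcard, Finset.card_product, Nat.card_Ico, Nat.card_Ico] at h
    rw [← hcardL]
    exact h
  -- sums over product sets
  have sum_gen : ∀ s t : Finset ℕ, ∑ p ∈ s ×ˢ t, w p
      = t.card * (∑ u ∈ s, u) * a2 + s.card * (∑ v ∈ t, v) * a3 := by
    intro s t
    rw [Finset.sum_product]
    simp only [hwdef]
    calc ∑ x ∈ s, ∑ y ∈ t, (x * a2 + y * a3)
        = ∑ x ∈ s, (t.card * (x * a2) + (∑ y ∈ t, y) * a3) :=
          Finset.sum_congr rfl (fun x _ => by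
            rw [Finset.sum_add_distrib, Finset.sum_const, ← Finset.sum_mul, smul_eq_mul])
      _ = t.card * (∑ x ∈ s, x * a2) + s.card * ((∑ y ∈ t, y) * a3) := by
          rw [Finset.sum_add_distrib, Finset.sum_const, ← Finset.mul_sum, smul_eq_mul]
      _ = (t.card * ∑ u ∈ s, u) * a2 + (s.card * ∑ v ∈ t, v) * a3 := by
          rw [← Finset.sum_mul]; ring
  have gauss : ∀ n : ℕ, 2 * (∑ i ∈ Finset.range n, i) = n * (n - 1) := by
    intro n
    rw [mul_comm]
    exact Finset.sum_range_id_mul_two n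
  have hsum_split : (∑ p ∈ L, w p) + (∑ p ∈ Finset.Ico A l2 ×ˢ Finset.Ico B l3, w p)
      = ∑ p ∈ Finset.range l2 ×ˢ Finset.range l3, w p := by
    rw [← hrect, hLdef]
    exact Finset.sum_filter_add_sum_filter_not _ _ _
  -- the finite set of gaps
  set GFin : Finset ℕ :=
    L.biUnion (fun p => (Finset.range (w p / a1)).image (fun j => w p % a1 + j * a1))
    with hGdef
  have hblockmem : ∀ p : ℕ × ℕ, ∀ n : ℕ,
      n ∈ (Finset.range (w p / a1)).image (fun j => w p % a1 + j * a1)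
      ↔ (n % a1 = w p % a1 ∧ n < w p) := by
    intro p n
    simp only [Finset.mem_image, Finset.mem_range]
    constructor
    · rintro ⟨j, hj, rfl⟩
      constructor
      · rw [Nat.add_mul_mod_self_right, Nat.mod_mod_of_dvd _ dvd_rfl]
      · have h2 := Nat.mod_add_div' (w p) a1
        have h3 : (j + 1) * a1 ≤ w p / a1 * a1 := Nat.mul_le_mul_right _ hj
        have h4 : (j + 1) * a1 = j * a1 + a1 := by ring
        linarith
    · rintro ⟨hmod, hlt⟩
      refine ⟨n / a1, ?_, ?_⟩
      · have h1 := Nat.mod_add_div' n a1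
        have h2 := Nat.mod_add_div' (w p) a1
        have h3 : n / a1 * a1 < w p / a1 * a1 := by linarith
        exact Nat.lt_of_mul_lt_mul_right h3
      · rw [← hmod]
        exact (Nat.mod_add_div' n a1)
  have hGmem : ∀ n, n ∈ GFin ↔ ∃ p ∈ L, n % a1 = w p % a1 ∧ n < w p := by
    intro n
    simp only [hGdef, Finset.mem_biUnion]
    constructor
    · rintro ⟨p, hp, hmem⟩
      exact ⟨p, hp, (hblockmem p n).mp hmem⟩
    · rintro ⟨p, hp, h⟩
      exact ⟨p, hp, (hblockmem p n).mpr h⟩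
  have hGset : {z : ℕ | ¬∃ y1 y2 y3 : ℕ, z = y1 * a1 + y2 * a2 + y3 * a3} = ↑GFin := by
    ext n
    simp only [Set.mem_setOf_eq, Finset.mem_coe]
    rw [hGmem n]
    constructor
    · intro hgap
      obtain ⟨p, hp, hpr⟩ := wsurj (n % a1) (Nat.mod_lt _ ha1)
      refine ⟨p, hp, hpr.symm, ?_⟩
      by_contra hcon
      push_neg at hcon
      obtain ⟨k, hk⟩ := (Nat.modEq_iff_dvd' hcon).mp hpr
      have hn : n = a1 * k + w p := by omega
      exact hgap ⟨k, p.1, p.2, by rw [hn]; simp only [hwdef]; ring⟩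
    · rintro ⟨p, hp, hmod, hlt⟩ ⟨y1, y2, y3, rfl⟩
      obtain ⟨x', q, hq, heq⟩ := red (y2 * a2 + y3 * a3) y1 y2 y3 le_rfl
      have h1 : (y1 * a1 + y2 * a2 + y3 * a3) % a1 = w q % a1 := by
        rw [heq, Nat.add_comm, Nat.add_mul_mod_self_right]
      have hqp : q = p := winj q hq p hp (h1.symm.trans hmod)
      rw [hqp] at heq
      omega
  have hN : {z : ℕ | ¬∃ y1 y2 y3 : ℕ, z = y1 * a1 + y2 * a2 + y3 * a3}.ncard
      = ∑ p ∈ L, w p / a1 := by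
    rw [hGset, Set.ncard_coe_finset, hGdef]
    rw [Finset.card_biUnion]
    · apply Finset.sum_congr rfl
      intro p _
      rw [Finset.card_image_of_injective _ (fun i j h => by
        have h2 : i * a1 = j * a1 := by omega
        exact Nat.eq_of_mul_eq_mul_right ha1 h2), Finset.card_range]
    · intro p hp q hq hpq
      rw [Function.onFun, Finset.disjoint_left]
      intro n hn hn'
      have h1 := (hblockmem p n).mp hn
      have h2 := (hblockmem q n).mp hn'
      exact hpq (winj p hp q hq (h1.1.symm.trans h2.1))
  have hressum : ∑ p ∈ L, (w p % a1) = ∑ r ∈ Finset.range a1, r := by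
    rw [← himg, Finset.sum_image (fun x hx y hy h => winj x hx y hy h)]
  have hdivsum : a1 * (∑ p ∈ L, w p / a1) + ∑ p ∈ L, w p % a1 = ∑ p ∈ L, w p := by
    rw [Finset.mul_sum, ← Finset.sum_add_distrib]
    exact Finset.sum_congr rfl (fun p _ => Nat.div_add_mod _ _)
  -- final assembly
  rw [hN]
  apply Nat.eq_of_mul_eq_mul_left ha1
  have hg : 2 * (∑ p ∈ L, w p % a1) = a1 * (a1 - 1) := by rw [hressum]; exact gauss a1
  have sq' : ∀ n : ℕ, n * (n - 1) + n = n * n := by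
    intro n
    rcases Nat.eq_zero_or_pos n with h | h
    · subst h; simp
    · zify [h]; ring
  have h4n := sum_gen (Finset.range l2) (Finset.range l3)
  rw [Finset.card_range, Finset.card_range] at h4n
  have h5n := sum_gen (Finset.Ico A l2) (Finset.Ico B l3)
  rw [Nat.card_Ico, Nat.card_Ico] at h5n
  have hconsA : A ≤ l2 → (∑ i ∈ Finset.range A, i) + (∑ i ∈ Finset.Ico A l2, i)
      = ∑ i ∈ Finset.range l2, i := by
    intro hA
    exact Finset.sum_range_add_sum_Ico _ hA
  have hconsB : B ≤ l3 → (∑ i ∈ Finset.range B, i) + (∑ i ∈ Finset.Ico B l3, i)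
      = ∑ i ∈ Finset.range l3, i := by
    intro hB
    exact Finset.sum_range_add_sum_Ico _ hB
  have hrect0A : l2 < A → (∑ p ∈ Finset.Ico A l2 ×ˢ Finset.Ico B l3, w p) = 0 := by
    intro h
    rw [Finset.Ico_eq_empty (by omega), Finset.empty_product, Finset.sum_empty]
  have hrect0B : l3 < B → (∑ p ∈ Finset.Ico A l2 ×ˢ Finset.Ico B l3, w p) = 0 := by
    intro h
    rw [Finset.Ico_eq_empty (show ¬ B < l3 by omega), Finset.product_empty, Finset.sum_empty]
  have ga2 := gauss l2
  have ga3 := gauss l3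
  have gaA := gauss A
  have gaB := gauss B
  set S2 := ∑ i ∈ Finset.range l2, i with hS2def
  set S3 := ∑ i ∈ Finset.range l3, i with hS3def
  set SA := ∑ i ∈ Finset.range A, i with hSAdef
  set SB := ∑ i ∈ Finset.range B, i with hSBdef
  set SIA := ∑ i ∈ Finset.Ico A l2, i with hSIAdef
  set SIB := ∑ i ∈ Finset.Ico B l3, i with hSIBdef
  set SL := ∑ p ∈ L, w p with hSLdef
  set Sres := ∑ p ∈ L, w p % a1 with hSresdef
  set Sdiv := ∑ p ∈ L, w p / a1 with hSdivdef
  set Sbox := ∑ p ∈ Finset.range l2 ×ˢ Finset.range l3, w p with hSboxdef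
  set Srect := ∑ p ∈ Finset.Ico A l2 ×ˢ Finset.Ico B l3, w p with hSrectdef
  clear_value S2 S3 SA SB SIA SIB SL Sres Sdiv Sbox Srect
  -- additive nat facts
  have e2 : 2 * S2 + l2 = l2 * l2 := by linarith [sq' l2]
  have e3 : 2 * S3 + l3 = l3 * l3 := by linarith [sq' l3]
  have eA : 2 * SA + A = A * A := by linarith [sq' A]
  have eB : 2 * SB + B = B * B := by linarith [sq' B]
  have eres : 2 * Sres + a1 = a1 * a1 := by linarith [sq' a1]
  -- integer versions
  have zh1 : (a1:ℤ) * Sdiv + Sres = SL := by exact_mod_cast hdivsum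
  have zh2 : 2 * (Sres:ℤ) + a1 = a1 * a1 := by exact_mod_cast eres
  have zh3 : (SL:ℤ) + Srect = Sbox := by exact_mod_cast hsum_split
  have zh4 : (Sbox:ℤ) = l3 * S2 * a2 + l2 * S3 * a3 := by exact_mod_cast h4n
  have zh6 : 2 * (S2:ℤ) = l2 * (l2 - 1) := by
    have : 2 * (S2:ℤ) + l2 = l2 * l2 := by exact_mod_cast e2
    linarith
  have zh7 : 2 * (S3:ℤ) = l3 * (l3 - 1) := by
    have : 2 * (S3:ℤ) + l3 = l3 * l3 := by exact_mod_cast e3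
    linarith
  zify [show 1 ≤ l1 by omega, show 1 ≤ l2 by omega, show 1 ≤ l3 by omega]
  by_cases hA : A ≤ l2
  · by_cases hB : B ≤ l3
    · -- main case
      have eIA : 2 * SIA + A * A + l2 = l2 * l2 + A := by linarith [hconsA hA, e2, eA]
      have eIB : 2 * SIB + B * B + l3 = l3 * l3 + B := by linarith [hconsB hB, e3, eB]
      have zSIA : 2 * (SIA:ℤ) = l2 * (l2 - 1) - A * (A - 1) := by
        have : 2 * (SIA:ℤ) + A * A + l2 = l2 * l2 + A := by exact_mod_cast eIA
        linarith
      have zSIB : 2 * (SIB:ℤ) = l3 * (l3 - 1) - B * (B - 1) := by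
        have : 2 * (SIB:ℤ) + B * B + l3 = l3 * l3 + B := by exact_mod_cast eIB
        linarith
      have zh5n : (Srect:ℤ) = ((l3:ℤ) - B) * SIA * a2 + ((l2:ℤ) - A) * SIB * a3 := by
        zify [hA, hB] at h5n
        linarith
      have zhc : (a1:ℤ) + ((l2:ℤ) - A) * ((l3:ℤ) - B) = l2 * l3 := by
        zify [hA, hB] at hcard2
        linarith
      have zh5 : 2 * (Srect:ℤ)
          = ((l3:ℤ) - B) * ((l2:ℤ) * (l2 - 1) - A * (A - 1)) * a2
            + ((l2:ℤ) - A) * ((l3:ℤ) * (l3 - 1) - B * (B - 1)) * a3 := by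
        linear_combination 2 * zh5n + ((l3:ℤ) - B) * a2 * zSIA + ((l2:ℤ) - A) * a3 * zSIB
      linear_combination 2*zh1 - zh2 + 2*zh3 + 2*zh4 + (l3:ℤ)*a2*zh6 + (l2:ℤ)*a3*zh7
        - zh5 - ((l1:ℤ)*a1)*zhc + (((l2:ℤ)-A)*((l3:ℤ)-B))*z1
        - (((l2:ℤ)-1)*a2)*zhc - (((l3:ℤ)-1)*a3)*zhc
    · -- degenerate: l3 < B
      have zh5d : (Srect:ℤ) = 0 := by
        rw [hrect0B (by omega)]; simp
      have h0 : l3 - B = 0 := by omega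
      rw [h0, Nat.mul_zero, Nat.add_zero] at hcard2
      have zhc : (a1:ℤ) = l2 * l3 := by exact_mod_cast hcard2
      linear_combination 2*zh1 - zh2 + 2*zh3 + 2*zh4 + (l3:ℤ)*a2*zh6 + (l2:ℤ)*a3*zh7
        - 2*zh5d - ((l1:ℤ)*a1 + ((l2:ℤ)-1)*a2 + ((l3:ℤ)-1)*a3)*zhc
  · -- degenerate: l2 < A
    have zh5d : (Srect:ℤ) = 0 := by
      rw [hrect0A (by omega)]; simp
    have h0 : l2 - A = 0 := by omega
    rw [h0, Nat.zero_mul, Nat.add_zero] at hcard2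
    have zhc : (a1:ℤ) = l2 * l3 := by exact_mod_cast hcard2
    linear_combination 2*zh1 - zh2 + 2*zh3 + 2*zh4 + (l3:ℤ)*a2*zh6 + (l2:ℤ)*a3*zh7
      - 2*zh5d - ((l1:ℤ)*a1 + ((l2:ℤ)-1)*a2 + ((l3:ℤ)-1)*a3)*zhc

theorem frobenius_count_three (a1 a2 a3 l1 l2 l3 : ℕ)
    (ha1 : 0 < a1) (ha2 : 0 < a2) (ha3 : 0 < a3)
    (h12 : Nat.Coprime a1 a2) (h13 : Nat.Coprime a1 a3) (h23 : Nat.Coprime a2 a3)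
    (hl1 : IsLeast {l : ℕ | 0 < l ∧ ∃ x y : ℕ, l * a1 = x * a2 + y * a3} l1)
    (hl2 : IsLeast {l : ℕ | 0 < l ∧ ∃ x y : ℕ, l * a2 = x * a1 + y * a3} l2)
    (hl3 : IsLeast {l : ℕ | 0 < l ∧ ∃ x y : ℕ, l * a3 = x * a1 + y * a2} l3)
    (h2l1 : 2 ≤ l1) (h2l2 : 2 ≤ l2) (h2l3 : 2 ≤ l3) :
    2 * {z : ℕ | ¬∃ y1 y2 y3 : ℕ, z = y1 * a1 + y2 * a2 + y3 * a3}.ncard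
      + l1 * l2 * l3
      = (l1 - 1) * a1 + (l2 - 1) * a2 + (l3 - 1) * a3 + 1 := by
  have hswap : ∀ (c d e M : ℕ),
      IsLeast {l : ℕ | 0 < l ∧ ∃ x y : ℕ, l * c = x * d + y * e} M →
      IsLeast {l : ℕ | 0 < l ∧ ∃ x y : ℕ, l * c = x * e + y * d} M := by
    rintro c d e M ⟨⟨hp, x, y, hxy⟩, hlb⟩
    refine ⟨⟨hp, y, x, by linarith⟩, fun l hl => ?_⟩
    obtain ⟨hp', x', y', h'⟩ := hl
    exact hlb ⟨hp', y', x', by linarith⟩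
  have key3 : a3 ≤ a1 → a3 ≤ a2 →
      2 * {z : ℕ | ¬∃ y1 y2 y3 : ℕ, z = y1 * a1 + y2 * a2 + y3 * a3}.ncard
        + l1 * l2 * l3
        = (l1 - 1) * a1 + (l2 - 1) * a2 + (l3 - 1) * a3 + 1 := by
    intro h31 h32
    have H := frob_aux a3 a1 a2 l3 l1 l2 ha3 ha1 ha2 h13.symm h23.symm h12
      hl3 (hswap a1 a2 a3 l1 hl1) (hswap a2 a1 a3 l2 hl2) h2l3 h2l1 h2l2 h31 h32
    have hset : {z : ℕ | ¬∃ y1 y2 y3 : ℕ, z = y1 * a3 + y2 * a1 + y3 * a2}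
        = {z : ℕ | ¬∃ y1 y2 y3 : ℕ, z = y1 * a1 + y2 * a2 + y3 * a3} := by
      ext z
      simp only [Set.mem_setOf_eq]
      constructor
      · intro h hcon
        obtain ⟨y1, y2, y3, hz⟩ := hcon
        exact h ⟨y3, y1, y2, by linarith⟩
      · intro h hcon
        obtain ⟨y1, y2, y3, hz⟩ := hcon
        exact h ⟨y2, y3, y1, by linarith⟩
    rw [hset] at H
    have e1 : l3 * l1 * l2 = l1 * l2 * l3 := by ring
    linarith [H]
  rcases le_total a1 a2 with h12' | h12'
  · rcases le_total a1 a3 with h13' | h13'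
    · exact frob_aux a1 a2 a3 l1 l2 l3 ha1 ha2 ha3 h12 h13 h23 hl1 hl2 hl3
        h2l1 h2l2 h2l3 h12' h13'
    · exact key3 h13' (le_trans h13' h12')
  · rcases le_total a2 a3 with h23' | h23'
    · have H := frob_aux a2 a1 a3 l2 l1 l3 ha2 ha1 ha3 h12.symm h23 h13
        hl2 hl1 (hswap a3 a1 a2 l3 hl3) h2l2 h2l1 h2l3 h12' h23'
      have hset : {z : ℕ | ¬∃ y1 y2 y3 : ℕ, z = y1 * a2 + y2 * a1 + y3 * a3}
          = {z : ℕ | ¬∃ y1 y2 y3 : ℕ, z = y1 * a1 + y2 * a2 + y3 * a3} := by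
        ext z
        simp only [Set.mem_setOf_eq]
        constructor
        · intro h hcon
          obtain ⟨y1, y2, y3, hz⟩ := hcon
          exact h ⟨y2, y1, y3, by linarith⟩
        · intro h hcon
          obtain ⟨y1, y2, y3, hz⟩ := hcon
          exact h ⟨y2, y1, y3, by linarith⟩
      rw [hset] at H
      have e1 : l2 * l1 * l3 = l1 * l2 * l3 := by ring
      linarith [H]
    · exact key3 (le_trans h23' h12') h23'
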